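/- arXiv:2408.14926 — 3 statements merged into one kernel-verified Lean document; each statement's English description precedes it below -/
import Mathlib

section
/- Let A ∈ ℝ^{n×n} be symmetric positive definite, B ∈ ℝ^{m×n}, and C ∈ ℝ^{m×m} symmetric positive semi-definite with the Schur complement S := C + B A⁻¹ Bᵀ positive definite. Then every eigenvalue λ of the generalized eigenvalue problem [[A, Bᵀ],[B, -C]] w = λ [[A, 0],[0, S]] w satisfies λ ∈ [-1, (1-√5)/2] ∪ [1, (1+√5)/2]. -/
open Matrix Set

lemma scalar_lemma (lam s c : ℝ) (hs : 0 ≤ s) (hc : 0 ≤ c) (hsc : 0 < s + c)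
    (hkey : (lam ^ 2 - lam - 1) * s + (lam ^ 2 - 1) * c = 0) :
    lam ∈ Set.Icc (-1 : ℝ) ((1 - Real.sqrt 5) / 2) ∪
      Set.Icc (1 : ℝ) ((1 + Real.sqrt 5) / 2) := by
  have h5 : Real.sqrt 5 ^ 2 = 5 := Real.sq_sqrt (by norm_num)
  have h2 : (2 : ℝ) < Real.sqrt 5 := by nlinarith [Real.sqrt_nonneg 5]
  have h3 : Real.sqrt 5 < 3 := by nlinarith [Real.sqrt_nonneg 5]
  by_contra hcon
  simp only [Set.mem_union, Set.mem_Icc, not_or, not_and_or, not_le] at hcon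
  obtain ⟨h1, h2'⟩ := hcon
  have hfg : (lam ^ 2 - lam - 1) * (lam ^ 2 - 1) ≤ 0 := by
    rcases eq_or_lt_of_le hs with hs0 | hs0
    · have hcpos : 0 < c := by linarith
      have h0 : (lam ^ 2 - 1) * c = 0 := by
        rw [← hs0] at hkey; linear_combination hkey
      have hg : lam ^ 2 - 1 = 0 :=
        (mul_eq_zero.1 h0).resolve_right (by linarith)
      rw [hg, mul_zero]
    · nlinarith [sq_nonneg (lam ^ 2 - 1), mul_nonneg hc hs]
  rcases h1 with h1 | h1 <;> rcases h2' with h2' | h2'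
  · have hf : 0 < lam ^ 2 - lam - 1 := by nlinarith
    have hg : 0 < lam ^ 2 - 1 := by nlinarith
    nlinarith [mul_pos hf hg]
  · -- lam < -1 and (1+√5)/2 < lam : impossible
    linarith
  · -- (1-√5)/2 < lam < 1
    have hp : 0 < lam - (1 - Real.sqrt 5) / 2 := by linarith
    have hq : 0 < (1 + Real.sqrt 5) / 2 - lam := by linarith
    have hf : lam ^ 2 - lam - 1 < 0 := by nlinarith [mul_pos hp hq]
    have hm1 : -1 < lam := by linarith
    have hg : lam ^ 2 - 1 < 0 := by nlinarith
    nlinarith [mul_pos (neg_pos.2 hf) (neg_pos.2 hg)]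
  · -- lam > (1+√5)/2
    have hp : 0 < lam - (1 + Real.sqrt 5) / 2 := by linarith
    have hq : 0 < lam - (1 - Real.sqrt 5) / 2 := by linarith
    have hf : 0 < lam ^ 2 - lam - 1 := by nlinarith [mul_pos hp hq]
    have hg : 0 < lam ^ 2 - 1 := by nlinarith
    nlinarith [mul_pos hf hg]

/-- Eigenvalues of the block-diagonally preconditioned saddle-point matrix lie in
`[-1, (1-√5)/2] ∪ [1, (1+√5)/2]`. -/
theorem stmt_0 {n m : ℕ}
    (A : Matrix (Fin n) (Fin n) ℝ) (B : Matrix (Fin m) (Fin n) ℝ)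
    (C : Matrix (Fin m) (Fin m) ℝ)
    (hA : A.PosDef) (hC : C.PosSemidef)
    (hS : (C + B * A⁻¹ * Bᵀ).PosDef)
    (lam : ℝ) (w : (Fin n ⊕ Fin m) → ℝ) (hw : w ≠ 0)
    (heig : (Matrix.fromBlocks A Bᵀ B (-C)).mulVec w
      = lam • (Matrix.fromBlocks A 0 0 (C + B * A⁻¹ * Bᵀ)).mulVec w) :
    lam ∈ Set.Icc (-1 : ℝ) ((1 - Real.sqrt 5) / 2) ∪
      Set.Icc (1 : ℝ) ((1 + Real.sqrt 5) / 2) := by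
  by_cases hlam1 : lam = 1
  · subst hlam1
    right
    refine ⟨le_refl 1, ?_⟩
    have : (2:ℝ) < Real.sqrt 5 := by
      nlinarith [Real.sqrt_nonneg 5, Real.sq_sqrt (show (0:ℝ) ≤ 5 by norm_num)]
    linarith
  set x : Fin n → ℝ := w ∘ Sum.inl with hxdef
  set y : Fin m → ℝ := w ∘ Sum.inr with hydef
  rw [Matrix.fromBlocks_mulVec, Matrix.fromBlocks_mulVec] at heig
  have eq1 : A *ᵥ x + Bᵀ *ᵥ y = lam • (A *ᵥ x) := by
    funext i
    have h := congrFun heig (Sum.inl i)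
    simpa [Matrix.zero_mulVec] using h
  have eq2 : B *ᵥ x - C *ᵥ y = lam • ((C + B * A⁻¹ * Bᵀ) *ᵥ y) := by
    funext i
    have h := congrFun heig (Sum.inr i)
    simpa [Matrix.zero_mulVec, Matrix.neg_mulVec, sub_eq_add_neg] using h
  have hAunit : IsUnit A.det := Matrix.isUnit_iff_isUnit_det A |>.1 hA.isUnit
  have hAinv : A⁻¹ * A = 1 := Matrix.nonsing_inv_mul A hAunit
  have hl : lam - 1 ≠ 0 := sub_ne_zero.2 hlam1
  have eqBty : Bᵀ *ᵥ y = (lam - 1) • (A *ᵥ x) := by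
    rw [sub_smul, one_smul, ← eq1]; abel
  -- y ≠ 0
  have hy0 : y ≠ 0 := by
    intro h0
    have hAx0 : A *ᵥ x = 0 := by
      have : (lam - 1) • (A *ᵥ x) = 0 := by
        rw [← eqBty, h0, Matrix.mulVec_zero]
      exact (smul_eq_zero.1 this).resolve_left hl
    have hx0 : x = 0 := by
      have h' : A⁻¹ *ᵥ (A *ᵥ x) = x := by
        rw [Matrix.mulVec_mulVec, hAinv, Matrix.one_mulVec]
      rw [hAx0, Matrix.mulVec_zero] at h'
      exact h'.symm
    apply hw
    funext z
    cases z with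
    | inl i => exact congrFun hx0 i
    | inr j => exact congrFun h0 j
  -- solve for x
  have eqx : x = (lam - 1)⁻¹ • (A⁻¹ *ᵥ (Bᵀ *ᵥ y)) := by
    rw [eqBty, Matrix.mulVec_smul, smul_smul, inv_mul_cancel₀ hl, one_smul,
      Matrix.mulVec_mulVec, hAinv, Matrix.one_mulVec]
  set c : ℝ := y ⬝ᵥ (C *ᵥ y) with hcdef
  set s : ℝ := (Bᵀ *ᵥ y) ⬝ᵥ (A⁻¹ *ᵥ (Bᵀ *ᵥ y)) with hsdef
  have hBAB : y ⬝ᵥ ((B * A⁻¹ * Bᵀ) *ᵥ y) = s := by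
    rw [← Matrix.mulVec_mulVec, ← Matrix.mulVec_mulVec,
      Matrix.dotProduct_mulVec y B, ← Matrix.mulVec_transpose]
  have hyBx : y ⬝ᵥ (B *ᵥ x) = (lam - 1)⁻¹ * s := by
    rw [Matrix.dotProduct_mulVec y B, ← Matrix.mulVec_transpose, eqx,
      dotProduct_smul, smul_eq_mul]
  -- scalar equation
  have heq : (lam - 1)⁻¹ * s - c = lam * (c + s) := by
    have h := congrArg (fun v => y ⬝ᵥ v) eq2
    simp only [dotProduct_sub, dotProduct_smul, smul_eq_mul,
      Matrix.add_mulVec, dotProduct_add, hBAB, hyBx] at h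
    rw [← hcdef] at h
    linarith [h]
  have hkey : (lam ^ 2 - lam - 1) * s + (lam ^ 2 - 1) * c = 0 := by
    field_simp at heq
    nlinarith [heq]
  -- positivity
  have hc : 0 ≤ c := by simpa using hC.dotProduct_mulVec_nonneg y
  have hs : 0 ≤ s := by
    have h' := hA.inv.posSemidef.dotProduct_mulVec_nonneg (Bᵀ *ᵥ y)
    rw [hsdef, ← Matrix.mulVec_mulVec] at *
    simpa using h'
  have hsc : 0 < s + c := by
    have h := hS.dotProduct_mulVec_pos hy0
    simp only [star_trivial, Matrix.add_mulVec, dotProduct_add, hBAB] at h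
    rw [← hcdef] at h
    linarith
  exact scalar_lemma lam s c hs hc hsc hkey
end

section
/- The n×n tridiagonal matrix T₁ with diagonal entries (2, 2, ..., 2, √2), off-diagonal entries −1 except the last off-diagonal entry −1/√2, is symmetric positive definite. -/
open Matrix

/-- The tridiagonal matrix `T₁` with diagonal `(2, …, 2, √2)`, off-diagonal
entries `−1` except the last off-diagonal entry `−1/√2`. -/
noncomputable def T1 (n : ℕ) : Matrix (Fin n) (Fin n) ℝ :=
  Matrix.of fun i j =>
    if i = j then (if (i : ℕ) = n - 1 then Real.sqrt 2 else 2)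
    else if (i : ℕ) + 1 = (j : ℕ) ∨ (j : ℕ) + 1 = (i : ℕ) then
      (if (i : ℕ) = n - 1 ∨ (j : ℕ) = n - 1 then -(1 / Real.sqrt 2) else -1)
    else 0

open Finset
private lemma sqrt2_sq : Real.sqrt 2 * Real.sqrt 2 = 2 := Real.mul_self_sqrt (by norm_num)
private lemma sqrt2_pos : (0:ℝ) < Real.sqrt 2 := Real.sqrt_pos.mpr (by norm_num)
private lemma one_div_sqrt2 : (1:ℝ)/Real.sqrt 2 = Real.sqrt 2/2 := by
  rw [div_eq_div_iff sqrt2_pos.ne' (by norm_num : (2:ℝ) ≠ 0)]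
  linarith [sqrt2_sq]

private lemma keyA (m : ℕ) (y : ℕ → ℝ) :
    2 * (∑ k ∈ Finset.range (m+1), (y k)^2) + Real.sqrt 2 * (y (m+1))^2
      - 2 * (∑ k ∈ Finset.range m, y k * y (k+1)) - Real.sqrt 2 * (y m * y (m+1))
    = (y 0)^2 + (∑ k ∈ Finset.range m, (y k - y (k+1))^2)
      + (y m - (Real.sqrt 2 / 2) * y (m+1))^2 + (Real.sqrt 2 - 1/2) * (y (m+1))^2 := by
  induction m generalizing y with
  | zero =>
    simp only [zero_add, Finset.sum_range_one, Finset.sum_range_zero]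
    linear_combination (-(y 1)^2/4) * sqrt2_sq
  | succ m ih =>
    rw [Finset.sum_range_succ' (fun k => (y k)^2), Finset.sum_range_succ' (fun k => y k * y (k+1)),
        Finset.sum_range_succ' (fun k => (y k - y (k+1))^2)]
    linear_combination ih (fun k => y (k+1))

private lemma mainpos (m : ℕ) (x : Fin (m+2) → ℝ) (hx : x ≠ 0) :
    0 < dotProduct (star x) (T1 (m+2) *ᵥ x) := by
  set y : ℕ → ℝ := fun k => if h : k < m+2 then x ⟨k, h⟩ else 0 with hy
  set d : ℕ → ℝ := fun i => if i = m+1 then Real.sqrt 2 else 2 with hd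
  set e : ℕ → ℝ := fun i => if i + 1 = m+1 then -(Real.sqrt 2/2) else -1 with he
  have hyx : ∀ i : Fin (m+2), y (i : ℕ) = x i := by
    intro i; simp [hy, i.isLt]
  have hy0 : ∀ k, m+2 ≤ k → y k = 0 := by
    intro k hk; simp [hy, Nat.not_lt.mpr hk]
  have hentry : ∀ i j : Fin (m+2), T1 (m+2) i j =
      (if (i:ℕ) = (j:ℕ) then d i else 0) + (if (i:ℕ)+1 = (j:ℕ) then e i else 0)
        + (if (j:ℕ)+1 = (i:ℕ) then e j else 0) := by
    intro i j
    have hi := i.isLt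
    have hj := j.isLt
    simp only [T1, of_apply, Fin.ext_iff, hd, he, one_div_sqrt2]
    split_ifs <;> first | ring1 | (exfalso; omega)
  have hA : ∑ i ∈ range (m+2), ∑ j ∈ range (m+2), (if i = j then d i * (y i * y j) else 0)
      = ∑ i ∈ range (m+2), d i * (y i)^2 := by
    refine Finset.sum_congr rfl fun i hi => ?_
    rw [Finset.sum_ite_eq (range (m+2)) i (fun j => d i * (y i * y j)), if_pos hi]
    ring
  have hB : ∑ i ∈ range (m+2), ∑ j ∈ range (m+2), (if i+1 = j then e i * (y i * y j) else 0)
      = ∑ i ∈ range (m+2), e i * (y i * y (i+1)) := by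
    refine Finset.sum_congr rfl fun i _ => ?_
    rw [Finset.sum_ite_eq (range (m+2)) (i+1) (fun j => e i * (y i * y j))]
    by_cases h : i + 1 ∈ range (m+2)
    · rw [if_pos h]
    · rw [if_neg h, hy0 (i+1) (by simpa using h), mul_zero, mul_zero]
  have hC : ∑ i ∈ range (m+2), ∑ j ∈ range (m+2), (if j+1 = i then e j * (y i * y j) else 0)
      = ∑ i ∈ range (m+2), e i * (y i * y (i+1)) := by
    rw [Finset.sum_comm]
    refine Finset.sum_congr rfl fun j _ => ?_
    rw [Finset.sum_ite_eq (range (m+2)) (j+1) (fun i => e j * (y i * y j))]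
    by_cases h : j + 1 ∈ range (m+2)
    · rw [if_pos h]; ring
    · rw [if_neg h, hy0 (j+1) (by simpa using h), mul_zero, mul_zero]
  have hQ : dotProduct (star x) (T1 (m+2) *ᵥ x)
      = (∑ i ∈ range (m+2), d i * (y i)^2) + 2 * ∑ i ∈ range (m+2), e i * (y i * y (i+1)) := by
    have h1 : dotProduct (star x) (T1 (m+2) *ᵥ x)
        = ∑ i ∈ range (m+2), ∑ j ∈ range (m+2),
            ((if i = j then d i * (y i * y j) else 0) + (if i+1 = j then e i * (y i * y j) else 0)
              + (if j+1 = i then e j * (y i * y j) else 0)) := by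
      rw [dotProduct, ← Fin.sum_univ_eq_sum_range]
      refine Finset.sum_congr rfl fun i _ => ?_
      rw [mulVec, dotProduct, ← Fin.sum_univ_eq_sum_range, Finset.mul_sum]
      refine Finset.sum_congr rfl fun j _ => ?_
      rw [hentry i j, hyx, hyx]
      simp only [star_trivial]
      split_ifs <;> ring
    rw [h1]
    simp only [Finset.sum_add_distrib]
    rw [hA, hB, hC]
    ring
  -- evaluate the two sums
  have hdsum : ∑ i ∈ range (m+2), d i * (y i)^2
      = 2 * (∑ k ∈ range (m+1), (y k)^2) + Real.sqrt 2 * (y (m+1))^2 := by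
    rw [Finset.sum_range_succ, Finset.mul_sum]
    congr 1
    · refine Finset.sum_congr rfl fun i hi => ?_
      rw [Finset.mem_range] at hi
      rw [hd]; simp only; rw [if_neg (by omega)]
    · rw [hd]; simp
  have hesum : ∑ i ∈ range (m+2), e i * (y i * y (i+1))
      = -(∑ k ∈ range m, y k * y (k+1)) - (Real.sqrt 2/2) * (y m * y (m+1)) := by
    rw [Finset.sum_range_succ, Finset.sum_range_succ]
    rw [hy0 (m+2) le_rfl]
    have h1 : e (m+1) = -1 := by rw [he]; simp only; rw [if_neg (by omega)]
    have h2 : e m = -(Real.sqrt 2/2) := by rw [he]; simp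
    rw [h1, h2, ← Finset.sum_neg_distrib]
    have h3 : ∀ i ∈ range m, e i * (y i * y (i+1)) = -(y i * y (i+1)) := by
      intro i hi
      rw [Finset.mem_range] at hi
      rw [he]; simp only; rw [if_neg (by omega)]; ring
    rw [Finset.sum_congr rfl h3]
    ring
  rw [hQ, hdsum, hesum]
  have hkey := keyA m y
  have hrw : 2 * (∑ k ∈ range (m+1), (y k)^2) + Real.sqrt 2 * (y (m+1))^2
      + 2 * (-(∑ k ∈ range m, y k * y (k+1)) - (Real.sqrt 2/2) * (y m * y (m+1)))
      = (y 0)^2 + (∑ k ∈ range m, (y k - y (k+1))^2)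
        + (y m - (Real.sqrt 2 / 2) * y (m+1))^2 + (Real.sqrt 2 - 1/2) * (y (m+1))^2 := by
    linear_combination hkey
  rw [hrw]
  -- positivity
  have hs1 : (1:ℝ) ≤ Real.sqrt 2 := by nlinarith [sqrt2_sq, sqrt2_pos]
  by_contra hle
  push_neg at hle
  have t1 : (0:ℝ) ≤ (y 0)^2 := sq_nonneg _
  have t2 : (0:ℝ) ≤ ∑ k ∈ range m, (y k - y (k+1))^2 :=
    Finset.sum_nonneg fun k _ => sq_nonneg _
  have t3 : (0:ℝ) ≤ (y m - (Real.sqrt 2 / 2) * y (m+1))^2 := sq_nonneg _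
  have t4 : (0:ℝ) ≤ (Real.sqrt 2 - 1/2) * (y (m+1))^2 :=
    mul_nonneg (by linarith) (sq_nonneg _)
  have e1 : (y 0)^2 = 0 := by linarith
  have e2 : ∑ k ∈ range m, (y k - y (k+1))^2 = 0 := by linarith
  have e4 : (Real.sqrt 2 - 1/2) * (y (m+1))^2 = 0 := by linarith
  have hy00 : y 0 = 0 := by
    have := sq_eq_zero_iff.mp e1; exact this
  have hdiff : ∀ k ∈ range m, y k = y (k+1) := by
    intro k hk
    have := (Finset.sum_eq_zero_iff_of_nonneg fun k _ => sq_nonneg _).mp e2 k hk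
    have := sq_eq_zero_iff.mp this
    linarith
  have hlast : y (m+1) = 0 := by
    rcases mul_eq_zero.mp e4 with h | h
    · exfalso; linarith
    · exact sq_eq_zero_iff.mp h
  have hzero : ∀ k, k ≤ m → y k = 0 := by
    intro k
    induction k with
    | zero => exact fun _ => hy00
    | succ k ih =>
      intro hk
      have h1 : k ∈ range m := Finset.mem_range.mpr (by omega)
      rw [← hdiff k h1]
      exact ih (by omega)
  apply hx
  funext i
  have hix : x i = y (i : ℕ) := (hyx i).symm
  rw [Pi.zero_apply, hix]
  rcases Nat.lt_or_ge (i : ℕ) (m+1) with h | h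
  · exact hzero i (by omega)
  · have : (i : ℕ) = m + 1 := by have := i.isLt; omega
    rw [this]; exact hlast

private lemma herm (n : ℕ) : (T1 n).IsHermitian := by
  show (T1 n)ᴴ = T1 n
  ext i j
  simp only [conjTranspose_apply, T1, of_apply, star_trivial, Fin.ext_iff]
  split_ifs <;> first | rfl | omega

/-- `T₁` is symmetric positive definite. -/
theorem stmt_5 (n : ℕ) : (T1 n).PosDef := by
  refine posDef_iff_dotProduct_mulVec.mpr ⟨herm n, ?_⟩
  match n with
  | 0 => exact fun x hx => absurd (Subsingleton.elim x 0) hx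
  | 1 =>
    intro x hx
    have hx0 : x 0 ≠ 0 := by
      intro h; apply hx; funext i; rw [Subsingleton.elim i 0]; exact h
    have : dotProduct (star x) (T1 1 *ᵥ x) = Real.sqrt 2 * (x 0 * x 0) := by
      simp [dotProduct, mulVec, T1, Fin.sum_univ_one]
      ring
    rw [this]
    exact mul_pos sqrt2_pos (mul_self_pos.mpr hx0)
  | (m+2) => exact fun x hx => mainpos m x hx
end

section
/- Let A be symmetric positive definite and S = C + BA⁻¹Bᵀ with C symmetric positive semi-definite. For the preconditioned matrix 𝒫⁻¹𝒜 with 𝒫 = diag(A, S) and 𝒜 = [[A, Bᵀ],[B, −C]], if C = 0 then the eigenvalues of 𝒫⁻¹𝒜 belong to the set {1} ∪ [(1−√5)/2, (1+√5)/2] and more precisely each eigenvalue λ ≠ 1 satisfies λ² − λ − σ = 0 for some σ ∈ [0, 1], where σ is a generalized eigenvalue of (BA⁻¹Bᵀ, S). -/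
open Matrix

/-- If a positive definite matrix sends `v` to `0`, then `v = 0`. -/
lemma posDef_mulVec_eq_zero {k : ℕ} {M : Matrix (Fin k) (Fin k) ℝ}
    (hM : M.PosDef) {v : Fin k → ℝ} (hv : M.mulVec v = 0) : v = 0 := by
  by_contra h
  have := hM.dotProduct_mulVec_pos h
  rw [hv, dotProduct_zero] at this
  exact lt_irrefl 0 this

/-- Eigenvalue characterization for the preconditioned saddle-point matrix in
the case `C = 0`: with `S = B A⁻¹ Bᵀ` positive definite, any generalized
eigenvalue `λ` either equals 1 or satisfies `λ² − λ − σ = 0` for some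
`σ ∈ [0,1]` which is a generalized eigenvalue of `(B A⁻¹ Bᵀ, S)`; hence
`λ ∈ {1} ∪ [(1−√5)/2, (1+√5)/2]`. -/
theorem stmt_19 {n m : ℕ}
    (A : Matrix (Fin n) (Fin n) ℝ) (B : Matrix (Fin m) (Fin n) ℝ)
    (hA : A.PosDef) (hS : (B * A⁻¹ * Bᵀ).PosDef)
    (lam : ℝ) (x : Fin n → ℝ) (y : Fin m → ℝ)
    (hxy : ¬(x = 0 ∧ y = 0))
    (h1 : A.mulVec x + Bᵀ.mulVec y = lam • A.mulVec x)
    (h2 : B.mulVec x = lam • (B * A⁻¹ * Bᵀ).mulVec y) :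
    (lam ≠ 1 → ∃ σ ∈ Set.Icc (0 : ℝ) 1,
        lam ^ 2 - lam - σ = 0 ∧
        (B * A⁻¹ * Bᵀ).mulVec y = σ • (B * A⁻¹ * Bᵀ).mulVec y) ∧
      lam ∈ insert (1 : ℝ)
        (Set.Icc ((1 - Real.sqrt 5) / 2) ((1 + Real.sqrt 5) / 2)) := by
  have hAdet : IsUnit A.det := isUnit_iff_ne_zero.mpr (ne_of_gt hA.det_pos)
  -- key: if `lam ≠ 1`, then `lam ^ 2 - lam - 1 = 0`
  have key : lam ≠ 1 → lam ^ 2 - lam - 1 = 0 := by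
    intro hl
    have hl' : lam - 1 ≠ 0 := sub_ne_zero.mpr hl
    have h1' : Bᵀ.mulVec y = (lam - 1) • A.mulVec x := by
      rw [sub_smul, one_smul, ← h1]; abel
    -- y ≠ 0
    have hyne : y ≠ 0 := by
      intro hy
      apply hxy
      refine ⟨?_, hy⟩
      have hBty : Bᵀ.mulVec y = 0 := by rw [hy, mulVec_zero]
      rw [hBty] at h1'
      have hAx : A.mulVec x = 0 := by
        have := h1'.symm
        rcases smul_eq_zero.mp this with h | h
        · exact absurd h hl'
        · exact h
      exact posDef_mulVec_eq_zero hA hAx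
    have hSyne : (B * A⁻¹ * Bᵀ).mulVec y ≠ 0 := by
      intro h
      exact hyne (posDef_mulVec_eq_zero hS h)
    -- S y = (lam - 1) • B x
    have hSy : (B * A⁻¹ * Bᵀ).mulVec y = (lam - 1) • B.mulVec x := by
      calc (B * A⁻¹ * Bᵀ).mulVec y = B.mulVec (A⁻¹.mulVec (Bᵀ.mulVec y)) := by
            rw [← mulVec_mulVec, ← mulVec_mulVec]
        _ = (lam - 1) • B.mulVec (A⁻¹.mulVec (A.mulVec x)) := by
            rw [h1', mulVec_smul, mulVec_smul]
        _ = (lam - 1) • B.mulVec x := by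
            rw [mulVec_mulVec x A⁻¹ A, A.nonsing_inv_mul hAdet, one_mulVec]
    rw [h2, smul_smul] at hSy
    have : (1 - (lam - 1) * lam) • (B * A⁻¹ * Bᵀ).mulVec y = 0 := by
      rw [sub_smul, one_smul]; nth_rewrite 1 [hSy]; exact sub_self _
    rcases smul_eq_zero.mp this with h | h
    · nlinarith [h]
    · exact absurd h hSyne
  constructor
  · intro hl
    exact ⟨1, ⟨le_refl 0 |>.trans zero_le_one, le_refl 1⟩, key hl, (one_smul _ _).symm⟩
  · by_cases hl : lam = 1
    · exact Or.inl hl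
    · right
      have hq := key hl
      have h5 : Real.sqrt 5 ^ 2 = 5 := Real.sq_sqrt (by norm_num)
      have h5n : 0 ≤ Real.sqrt 5 := Real.sqrt_nonneg 5
      constructor
      · nlinarith [sq_nonneg (2 * lam - 1 + Real.sqrt 5)]
      · nlinarith [sq_nonneg (2 * lam - 1 - Real.sqrt 5)]
end
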